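/- Suppose the sketching assumption holds, i.e., ‖UᵀSᵢSᵢᵀU − I_ρ‖₂ ≤ η for every i ∈ {1,…,m} and ‖UᵀSSᵀU − I_ρ‖₂ ≤ η/√m. Define Γᵢ := H^{−1/2}(H − H̃ᵢ)H^{−1/2}. Then ‖Γᵢ‖₂ ≤ ϑ·η for every i, and ‖(1/m)∑ᵢ Γᵢ‖₂ ≤ ϑ·η/√m, where ϑ = σ_max(AᵀA)/(σ_max(AᵀA) + σ_min(M)). -/

import Mathlib

open Matrix

/-- Spectral norm of a real matrix: operator norm of the induced map between
Euclidean spaces. -/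
noncomputable def specNorm {m n : ℕ} (A : Matrix (Fin m) (Fin n) ℝ) : ℝ :=
  ‖LinearMap.toContinuousLinearMap (Matrix.toEuclideanLin A)‖

/-- Largest eigenvalue of a (symmetric) real matrix, as the supremum of its spectrum. -/
noncomputable def sigmaMax {d : ℕ} (A : Matrix (Fin d) (Fin d) ℝ) : ℝ :=
  sSup (spectrum ℝ A)

/-- Smallest eigenvalue of a (symmetric) real matrix, as the infimum of its spectrum. -/
noncomputable def sigmaMin {d : ℕ} (A : Matrix (Fin d) (Fin d) ℝ) : ℝ :=
  sInf (spectrum ℝ A)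

noncomputable def Matrix.PosSemidef.sqrt {n : Type*} [Fintype n] [DecidableEq n]
    {A : Matrix n n ℝ} (hA : A.PosSemidef) : Matrix n n ℝ :=
  hA.1.eigenvectorUnitary.1 * diagonal ((↑) ∘ (√·) ∘ hA.1.eigenvalues) *
  (star hA.1.eigenvectorUnitary : Matrix n n ℝ)

lemma psdSqrt_mul_self {n : Type*} [Fintype n] [DecidableEq n]
    {A : Matrix n n ℝ} (hA : A.PosSemidef) : hA.sqrt * hA.sqrt = A := by
  have hU : (star hA.1.eigenvectorUnitary : Matrix n n ℝ) * hA.1.eigenvectorUnitary.1 = 1 :=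
    Unitary.coe_star_mul_self _
  have hD : diagonal (((↑) ∘ (√·) ∘ hA.1.eigenvalues) : n → ℝ)
      * diagonal ((↑) ∘ (√·) ∘ hA.1.eigenvalues)
      = diagonal (RCLike.ofReal ∘ hA.1.eigenvalues) := by
    rw [diagonal_mul_diagonal]
    congr 1; funext i
    simp [Real.mul_self_sqrt (hA.eigenvalues_nonneg i)]
  conv_rhs => rw [hA.1.spectral_theorem, Unitary.conjStarAlgAut_apply]
  unfold Matrix.PosSemidef.sqrt
  calc _ = hA.1.eigenvectorUnitary.1 * diagonal ((↑) ∘ (√·) ∘ hA.1.eigenvalues) *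
        ((star hA.1.eigenvectorUnitary : Matrix n n ℝ) * hA.1.eigenvectorUnitary.1) *
        diagonal ((↑) ∘ (√·) ∘ hA.1.eigenvalues) *
        (star hA.1.eigenvectorUnitary : Matrix n n ℝ) := by simp only [Matrix.mul_assoc]
    _ = _ := by rw [hU, Matrix.mul_one, Matrix.mul_assoc _ (diagonal _) (diagonal _), hD]

lemma psdSqrt_isHermitian {n : Type*} [Fintype n] [DecidableEq n]
    {A : Matrix n n ℝ} (hA : A.PosSemidef) : hA.sqrt.IsHermitian := by
  unfold Matrix.PosSemidef.sqrt Matrix.IsHermitian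
  rw [conjTranspose_mul, conjTranspose_mul, diagonal_conjTranspose]
  simp [Matrix.mul_assoc, Matrix.star_eq_conjTranspose, conjTranspose_eq_transpose_of_trivial]

section Aux

open scoped InnerProductSpace Matrix.Norms.L2Operator

lemma specNorm_eq_l2 {m n : ℕ} (A : Matrix (Fin m) (Fin n) ℝ) : specNorm A = ‖A‖ := rfl

lemma opNorm_le_of_symm {E : Type*} [NormedAddCommGroup E] [InnerProductSpace ℝ E]
    (T : E →L[ℝ] E) (hT : ∀ x y, ⟪T x, y⟫_ℝ = ⟪x, T y⟫_ℝ) {c : ℝ} (hc : 0 ≤ c)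
    (hq : ∀ x, |⟪T x, x⟫_ℝ| ≤ c * ‖x‖ ^ 2) : ‖T‖ ≤ c := by
  refine T.opNorm_le_bound hc fun x => ?_
  rcases eq_or_ne (T x) 0 with h0 | h0
  · rw [h0, norm_zero]; positivity
  have hx : x ≠ 0 := by rintro rfl; simp at h0
  have hTx : (0:ℝ) < ‖T x‖ := norm_pos_iff.mpr h0
  have hxn : (0:ℝ) < ‖x‖ := norm_pos_iff.mpr hx
  set y : E := (‖x‖ / ‖T x‖) • T x with hy
  have hyn : ‖y‖ = ‖x‖ := by
    rw [hy, norm_smul, Real.norm_eq_abs, abs_of_nonneg (by positivity),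
      div_mul_cancel₀ _ hTx.ne']
  have key : 4 * ⟪T x, y⟫_ℝ = ⟪T (x + y), x + y⟫_ℝ - ⟪T (x - y), x - y⟫_ℝ := by
    have h1 := hT x y
    have h2 := hT y x
    simp only [map_add, map_sub, inner_add_left, inner_add_right, inner_sub_left,
      inner_sub_right]
    have : ⟪T y, x⟫_ℝ = ⟪T x, y⟫_ℝ := by rw [h2, real_inner_comm]
    linarith [h1, this]
  have h1 : ⟪T (x+y), x+y⟫_ℝ ≤ c * ‖x+y‖^2 := (abs_le.mp (hq _)).2
  have h2 : -(c * ‖x-y‖^2) ≤ ⟪T (x-y), x-y⟫_ℝ := (abs_le.mp (hq _)).1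
  have hpar : ‖x+y‖^2 + ‖x-y‖^2 = 2*(‖x‖^2 + ‖y‖^2) := by
    have := parallelogram_law_with_norm ℝ x y
    nlinarith [this]
  have hip : ⟪T x, y⟫_ℝ = ‖x‖ * ‖T x‖ := by
    rw [hy, real_inner_smul_right, real_inner_self_eq_norm_sq]
    field_simp
  have hmain : 4 * (‖x‖ * ‖T x‖) ≤ 4 * (c * ‖x‖^2) := by
    rw [← hip]
    calc 4 * ⟪T x, y⟫_ℝ ≤ c * ‖x+y‖^2 + c * ‖x-y‖^2 := by rw [key]; linarith
    _ = c * (‖x+y‖^2 + ‖x-y‖^2) := by ring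
    _ = 2*c*(‖x‖^2 + ‖y‖^2) := by rw [hpar]; ring
    _ = 4 * (c * ‖x‖^2) := by rw [hyn]; ring
  have hmain' := (mul_le_mul_iff_right₀ (by norm_num : (0:ℝ) < 4)).mp hmain
  calc ‖T x‖ = (‖x‖ * ‖T x‖) / ‖x‖ := by field_simp
  _ ≤ (c * ‖x‖^2) / ‖x‖ := by gcongr
  _ = c * ‖x‖ := by field_simp

lemma specNorm_le_of_symm {d : ℕ} {X : Matrix (Fin d) (Fin d) ℝ} (hX : X.IsHermitian) {c : ℝ}
    (hc : 0 ≤ c)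
    (hq : ∀ x : EuclideanSpace ℝ (Fin d), |⟪toEuclideanLin X x, x⟫_ℝ| ≤ c * ‖x‖ ^ 2) :
    specNorm X ≤ c := by
  have hsym := (isHermitian_iff_isSymmetric).mp hX
  exact opNorm_le_of_symm (LinearMap.toContinuousLinearMap (toEuclideanLin X))
    (fun x y => hsym x y) hc hq

lemma toEuclideanLin_eigenvectorBasis {d : ℕ} {X : Matrix (Fin d) (Fin d) ℝ}
    (hX : X.IsHermitian) (j : Fin d) :
    toEuclideanLin X (hX.eigenvectorBasis j) = hX.eigenvalues j • hX.eigenvectorBasis j := by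
  have h := hX.mulVec_eigenvectorBasis j
  apply (WithLp.equiv 2 (Fin d → ℝ)).injective
  simpa [Matrix.toEuclideanLin_apply] using h

lemma rayleigh_expansion {d : ℕ} {X : Matrix (Fin d) (Fin d) ℝ} (hX : X.IsHermitian)
    (x : EuclideanSpace ℝ (Fin d)) :
    ⟪x, toEuclideanLin X x⟫_ℝ
      = ∑ j, hX.eigenvalues j * (hX.eigenvectorBasis.repr x j)^2 := by
  set b := hX.eigenvectorBasis
  set T := toEuclideanLin X
  have hsym : (toEuclideanLin X).IsSymmetric := (isHermitian_iff_isSymmetric).mp hX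
  have hrepr : ∀ j, b.repr (T x) j = hX.eigenvalues j * b.repr x j := by
    intro j
    rw [b.repr_apply_apply, b.repr_apply_apply, ← hsym (b j) x,
      toEuclideanLin_eigenvectorBasis hX j, real_inner_smul_left]
  have h0 : ⟪x, T x⟫_ℝ = ⟪b.repr x, b.repr (T x)⟫_ℝ := by rw [← b.repr.inner_map_map]
  rw [h0, PiLp.inner_apply]
  refine Finset.sum_congr rfl fun j _ => ?_
  rw [hrepr j]
  simp [RCLike.inner_apply]
  ring

lemma norm_sq_expansion {d : ℕ} (b : OrthonormalBasis (Fin d) ℝ (EuclideanSpace ℝ (Fin d)))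
    (x : EuclideanSpace ℝ (Fin d)) :
    ‖x‖^2 = ∑ j, (b.repr x j)^2 := by
  rw [← real_inner_self_eq_norm_sq, ← b.repr.inner_map_map, PiLp.inner_apply]
  refine Finset.sum_congr rfl fun j _ => ?_
  simp [RCLike.inner_apply]

lemma inner_le_sigmaMax {d : ℕ} {X : Matrix (Fin d) (Fin d) ℝ} (hX : X.IsHermitian)
    (x : EuclideanSpace ℝ (Fin d)) :
    ⟪x, toEuclideanLin X x⟫_ℝ ≤ sigmaMax X * ‖x‖^2 := by
  rw [rayleigh_expansion hX, norm_sq_expansion hX.eigenvectorBasis, Finset.mul_sum]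
  refine Finset.sum_le_sum fun j _ => ?_
  exact mul_le_mul_of_nonneg_right
    (le_csSup (Matrix.finite_real_spectrum (A := X)).bddAbove
      (hX.eigenvalues_mem_spectrum_real j)) (sq_nonneg _)

lemma sigmaMin_le_inner {d : ℕ} {X : Matrix (Fin d) (Fin d) ℝ} (hX : X.IsHermitian)
    (x : EuclideanSpace ℝ (Fin d)) :
    sigmaMin X * ‖x‖^2 ≤ ⟪x, toEuclideanLin X x⟫_ℝ := by
  rw [rayleigh_expansion hX, norm_sq_expansion hX.eigenvectorBasis, Finset.mul_sum]
  refine Finset.sum_le_sum fun j _ => ?_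
  exact mul_le_mul_of_nonneg_right
    (csInf_le (Matrix.finite_real_spectrum (A := X)).bddBelow
      (hX.eigenvalues_mem_spectrum_real j)) (sq_nonneg _)

lemma inner_nonneg_of_posSemidef {d : ℕ} {X : Matrix (Fin d) (Fin d) ℝ} (hX : X.PosSemidef)
    (x : EuclideanSpace ℝ (Fin d)) : 0 ≤ ⟪x, toEuclideanLin X x⟫_ℝ := by
  rw [rayleigh_expansion hX.1]
  exact Finset.sum_nonneg fun j _ =>
    mul_nonneg (hX.eigenvalues_nonneg j) (sq_nonneg _)

lemma toEuclideanLin_mul_apply {a b c : ℕ} (P : Matrix (Fin a) (Fin b) ℝ)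
    (Q : Matrix (Fin b) (Fin c) ℝ) (x : EuclideanSpace ℝ (Fin c)) :
    toEuclideanLin (P * Q) x = toEuclideanLin P (toEuclideanLin Q x) := by
  simp [Matrix.toEuclideanLin_apply, Matrix.mulVec_mulVec]

lemma toEuclideanLin_one_apply {a : ℕ} (x : EuclideanSpace ℝ (Fin a)) :
    toEuclideanLin (1 : Matrix (Fin a) (Fin a) ℝ) x = x := by
  simp [Matrix.toEuclideanLin_apply]

lemma sigmaMax_nonneg_of_psd {d : ℕ} (hd : 0 < d) {X : Matrix (Fin d) (Fin d) ℝ}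
    (hX : X.PosSemidef) : 0 ≤ sigmaMax X :=
  le_trans (hX.eigenvalues_nonneg ⟨0, hd⟩)
    (le_csSup (Matrix.finite_real_spectrum (A := X)).bddAbove
      (hX.1.eigenvalues_mem_spectrum_real ⟨0, hd⟩))

lemma sigmaMin_nonneg_of_psd {d : ℕ} (hd : 0 < d) {X : Matrix (Fin d) (Fin d) ℝ}
    (hX : X.PosSemidef) : 0 ≤ sigmaMin X := by
  refine le_csInf ?_ ?_
  · rw [hX.1.spectrum_real_eq_range_eigenvalues]
    exact ⟨_, ⟨⟨0, hd⟩, rfl⟩⟩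
  · intro z hz
    rw [hX.1.spectrum_real_eq_range_eigenvalues] at hz
    obtain ⟨i, rfl⟩ := hz
    exact hX.eigenvalues_nonneg i

lemma arith_aux (a b s t u : ℝ) (ha0 : 0 ≤ a) (hs0 : 0 ≤ s) (ht0 : 0 ≤ t) (hu : 0 ≤ u)
    (hau : a ≤ s*u) (htb : t*u ≤ b) : a*(s+t) ≤ s*(a+b) := by
  nlinarith [mul_le_mul_of_nonneg_right hau ht0, mul_le_mul_of_nonneg_left htb hs0]

lemma sandwich_le {n d : ℕ} (hd : 0 < d) (A : Matrix (Fin n) (Fin d) ℝ)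
    (M : Matrix (Fin d) (Fin d) ℝ) (hM : M.PosSemidef) (hH : (Aᵀ*A + M).PosDef) :
    specNorm ((hH.posSemidef.sqrt)⁻¹ * (Aᵀ*A) * (hH.posSemidef.sqrt)⁻¹)
      ≤ sigmaMax (Aᵀ*A) / (sigmaMax (Aᵀ*A) + sigmaMin M) := by
  set Q := hH.posSemidef.sqrt with hQ
  set R := Q⁻¹ with hR
  have hAA : (Aᵀ*A).PosSemidef := posSemidef_conjTranspose_mul_self A
  have hs := psdSqrt_isHermitian hH.posSemidef
  have hdet : IsUnit Q.det := by
    have h1 : Q.det * Q.det = (Aᵀ*A + M).det := by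
      rw [← Matrix.det_mul, psdSqrt_mul_self hH.posSemidef]
    have h2 : (Aᵀ*A + M).det ≠ 0 := ne_of_gt hH.det_pos
    refine isUnit_iff_ne_zero.mpr fun h => h2 ?_
    rw [← h1, h, mul_zero]
  have hQR : Q * R = 1 := Matrix.mul_nonsing_inv _ hdet
  have hRherm : R.IsHermitian := hs.inv
  have hsymR : (toEuclideanLin R).IsSymmetric := (isHermitian_iff_isSymmetric).mp hRherm
  have hsymQ : (toEuclideanLin Q).IsSymmetric := (isHermitian_iff_isSymmetric).mp hs
  set s := sigmaMax (Aᵀ*A) with hsdef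
  set t := sigmaMin M with htdef
  have hs0 : 0 ≤ s := sigmaMax_nonneg_of_psd hd hAA
  have ht0 : 0 ≤ t := sigmaMin_nonneg_of_psd hd hM
  have hXherm : (R * (Aᵀ*A) * R).IsHermitian := by
    have := hAA.1
    unfold Matrix.IsHermitian at *
    rw [conjTranspose_mul, conjTranspose_mul, this, hRherm]
    simp only [Matrix.mul_assoc]
  refine specNorm_le_of_symm hXherm (div_nonneg hs0 (add_nonneg hs0 ht0)) fun x => ?_
  set y := toEuclideanLin R x with hy
  have hTx : toEuclideanLin (R * (Aᵀ*A) * R) x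
      = toEuclideanLin R (toEuclideanLin (Aᵀ*A) y) := by
    rw [toEuclideanLin_mul_apply, toEuclideanLin_mul_apply]
  set a := ⟪y, toEuclideanLin (Aᵀ*A) y⟫_ℝ with ha
  set b := ⟪y, toEuclideanLin M y⟫_ℝ with hb
  have hqa : ⟪toEuclideanLin (R * (Aᵀ*A) * R) x, x⟫_ℝ = a := by
    rw [hTx, hsymR, real_inner_comm]
  have hxy : toEuclideanLin Q y = x := by
    rw [hy, ← toEuclideanLin_mul_apply, hQR, toEuclideanLin_one_apply]
  have hnormx : ‖x‖^2 = a + b := by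
    rw [← real_inner_self_eq_norm_sq, ← hxy, hsymQ, ← toEuclideanLin_mul_apply,
      psdSqrt_mul_self hH.posSemidef]
    have hadd : toEuclideanLin (Aᵀ*A + M) y = toEuclideanLin (Aᵀ*A) y + toEuclideanLin M y := by
      rw [map_add]; rfl
    rw [hadd, inner_add_right]
  have ha0 : 0 ≤ a := inner_nonneg_of_posSemidef hAA y
  have hb0 : 0 ≤ b := inner_nonneg_of_posSemidef hM y
  have hau : a ≤ s * ‖y‖^2 := inner_le_sigmaMax hAA.1 y
  have htb : t * ‖y‖^2 ≤ b := sigmaMin_le_inner hM.1 y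
  rw [hqa, abs_of_nonneg ha0, hnormx]
  rcases eq_or_lt_of_le (add_nonneg hs0 ht0) with hst | hst
  · have hs' : s = 0 := by nlinarith
    have hz : a = 0 := le_antisymm (by nlinarith [sq_nonneg ‖y‖]) ha0
    simp [hz, ← hst]
  · rw [div_mul_eq_mul_div, le_div_iff₀ hst]
    exact arith_aux a b s t (‖y‖^2) ha0 hs0 ht0 (sq_nonneg _) hau htb

end Aux

/-- **Bounds on the normalized Hessian errors `Γᵢ = H^{−1/2}(H − H̃ᵢ)H^{−1/2}`.**
Under the sketching assumption, `‖Γᵢ‖₂ ≤ ϑη` for every `i` and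
`‖(1/m)∑ᵢΓᵢ‖₂ ≤ ϑη/√m`, where `ϑ = σmax(AᵀA)/(σmax(AᵀA) + σmin(M))`. -/
theorem gamma_bounds
    (n d ρ s m : ℕ) (hm : 0 < m)
    (η : ℝ) (hη : η ∈ Set.Ioo (0 : ℝ) 1)
    (A : Matrix (Fin n) (Fin d) ℝ) (hrank : A.rank = ρ)
    (U : Matrix (Fin n) (Fin ρ) ℝ)
    (hUorth : Uᵀ * U = 1)
    (hUA : LinearMap.range U.mulVecLin = LinearMap.range A.mulVecLin)
    (M : Matrix (Fin d) (Fin d) ℝ) (hM : M.PosSemidef)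
    (hH : (Aᵀ * A + M).PosDef)
    (S : Fin m → Matrix (Fin n) (Fin s) ℝ)
    (hSi : ∀ i, specNorm (Uᵀ * (S i * (S i)ᵀ) * U - 1) ≤ η)
    (hS : specNorm (Uᵀ * ((m : ℝ)⁻¹ • ∑ i, S i * (S i)ᵀ) * U - 1) ≤ η / Real.sqrt m)
    (Γ : Fin m → Matrix (Fin d) (Fin d) ℝ)
    (hΓ : ∀ i, Γ i = (Matrix.PosSemidef.sqrt hH.posSemidef)⁻¹
      * ((Aᵀ * A + M) - (Aᵀ * (S i * (S i)ᵀ) * A + M)) * (Matrix.PosSemidef.sqrt hH.posSemidef)⁻¹)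
    (ϑ : ℝ)
    (hϑ : ϑ = sigmaMax (Aᵀ * A) / (sigmaMax (Aᵀ * A) + sigmaMin M)) :
    (∀ i, specNorm (Γ i) ≤ ϑ * η) ∧
      specNorm ((m : ℝ)⁻¹ • ∑ i, Γ i) ≤ ϑ * η / Real.sqrt m := by

  open scoped Matrix.Norms.L2Operator in
  obtain ⟨hη0, hη1⟩ := hη
  rcases Nat.eq_zero_or_pos d with hd | hd
  · -- degenerate case `d = 0`
    subst hd
    haveI : Subsingleton (Matrix (Fin 0) (Fin 0) ℝ) :=
      ⟨fun a b => by ext i j; exact i.elim0⟩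
    have hspec : ∀ Z : Matrix (Fin 0) (Fin 0) ℝ, spectrum ℝ Z = ∅ := fun Z =>
      Set.eq_empty_of_forall_notMem fun x hx =>
        (spectrum.mem_iff.mp hx) (isUnit_of_subsingleton _)
    have hϑ0 : ϑ = 0 := by
      rw [hϑ, sigmaMax, sigmaMin, hspec, hspec, Real.sSup_empty, Real.sInf_empty]
      norm_num
    have hzero : ∀ Z : Matrix (Fin 0) (Fin 0) ℝ, specNorm Z = 0 := fun Z => by
      rw [Subsingleton.elim Z 0, specNorm_eq_l2, norm_zero]
    constructor
    · intro i; rw [hzero, hϑ0, zero_mul]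
    · rw [hzero, hϑ0, zero_mul, zero_div]
  -- main case `0 < d`
  set Q := hH.posSemidef.sqrt with hQ
  set R := Q⁻¹ with hRdef
  have hsps := psdSqrt_isHermitian hH.posSemidef
  have hdet : IsUnit Q.det := by
    have h1 : Q.det * Q.det = (Aᵀ*A + M).det := by
      rw [← Matrix.det_mul, psdSqrt_mul_self hH.posSemidef]
    have h2 : (Aᵀ*A + M).det ≠ 0 := ne_of_gt hH.det_pos
    refine isUnit_iff_ne_zero.mpr fun h => h2 ?_
    rw [← h1, h, mul_zero]
  have hRherm : R.IsHermitian := hsps.inv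
  have hRT : Rᵀ = R := hRherm
  -- `U Uᵀ` is the identity on the range of `A`
  have hUUA : U * (Uᵀ * A) = A := by
    have hcol : ∀ v : Fin d → ℝ, (U * (Uᵀ * A)) *ᵥ v = A *ᵥ v := by
      intro v
      have hmem : A *ᵥ v ∈ LinearMap.range U.mulVecLin := by
        rw [hUA]; exact ⟨v, rfl⟩
      obtain ⟨w, hw⟩ := hmem
      have hw' : U *ᵥ w = A *ᵥ v := hw
      calc (U * (Uᵀ * A)) *ᵥ v = U *ᵥ (Uᵀ *ᵥ (A *ᵥ v)) := by
            rw [← Matrix.mulVec_mulVec, ← Matrix.mulVec_mulVec]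
      _ = U *ᵥ (Uᵀ *ᵥ (U *ᵥ w)) := by rw [hw']
      _ = U *ᵥ ((Uᵀ * U) *ᵥ w) := by simp only [Matrix.mulVec_mulVec, Matrix.mul_assoc]
      _ = U *ᵥ w := by rw [hUorth, Matrix.one_mulVec]
      _ = A *ᵥ v := hw'
    ext i j
    have h := congrFun (hcol (Pi.single j 1)) i
    simpa [Matrix.mulVec_single] using h
  have hAUU : Aᵀ * (U * Uᵀ) = Aᵀ := by
    have h := congrArg Matrix.transpose hUUA
    simpa [Matrix.transpose_mul, Matrix.mul_assoc] using h
  have hAUU2 : ∀ {k : ℕ} (X : Matrix (Fin n) (Fin k) ℝ), Aᵀ * (U * (Uᵀ * X)) = Aᵀ * X := by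
    intro k X
    rw [← Matrix.mul_assoc U Uᵀ X, ← Matrix.mul_assoc, hAUU]
  set C := Uᵀ * A * R with hC
  have hCt : Cᵀ = R * (Aᵀ * U) := by
    rw [hC, Matrix.transpose_mul, Matrix.transpose_mul, Matrix.transpose_transpose, hRT]
  -- the key factorization
  have hfac : ∀ W : Matrix (Fin n) (Fin n) ℝ,
      R * ((Aᵀ*A + M) - (Aᵀ*W*A + M)) * R
        = Cᵀ * ((1 : Matrix (Fin ρ) (Fin ρ) ℝ) - Uᵀ*W*U) * C := by
    intro W
    have hsub : (Aᵀ*A + M) - (Aᵀ*W*A + M) = Aᵀ*A - Aᵀ*W*A := by abel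
    have e1 : Aᵀ*U * ((1 : Matrix (Fin ρ) (Fin ρ) ℝ) - Uᵀ*W*U) * (Uᵀ*A)
        = Aᵀ*A - Aᵀ*W*A := by
      rw [Matrix.mul_sub, Matrix.mul_one, Matrix.sub_mul]
      congr 1
      · rw [Matrix.mul_assoc, hUUA]
      · simp only [Matrix.mul_assoc]
        rw [hUUA, hAUU2]
    rw [hsub, hCt, hC, ← e1]
    simp only [Matrix.mul_assoc]
  have hΓfac : ∀ i, Γ i = Cᵀ * ((1 : Matrix (Fin ρ) (Fin ρ) ℝ) - Uᵀ*(S i*(S i)ᵀ)*U) * C :=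
    fun i => by rw [hΓ i]; exact hfac _
  -- norm bound on `C`
  have hAA : (Aᵀ*A).PosSemidef := posSemidef_conjTranspose_mul_self A
  have hϑ0 : 0 ≤ ϑ := by
    rw [hϑ]
    exact div_nonneg (sigmaMax_nonneg_of_psd hd hAA)
      (add_nonneg (sigmaMax_nonneg_of_psd hd hAA) (sigmaMin_nonneg_of_psd hd hM))
  have hCtC : Cᵀ * C = R * (Aᵀ*A) * R := by
    rw [hCt, hC]
    simp only [Matrix.mul_assoc]
    rw [hAUU2]
  have hCbound : ‖C‖ * ‖C‖ ≤ ϑ := by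
    have h1 : ‖C‖ * ‖C‖ = ‖Cᵀ * C‖ := (Matrix.l2_opNorm_conjTranspose_mul_self C).symm
    rw [h1, hCtC, ← specNorm_eq_l2, hϑ]
    exact sandwich_le hd A M hM hH
  -- bound on the error factors
  have hEi : ∀ i, ‖(1 : Matrix (Fin ρ) (Fin ρ) ℝ) - Uᵀ*(S i*(S i)ᵀ)*U‖ ≤ η := by
    intro i
    rw [norm_sub_rev, ← specNorm_eq_l2]
    exact hSi i
  have hbound : ∀ (E : Matrix (Fin ρ) (Fin ρ) ℝ) (c : ℝ), ‖E‖ ≤ c →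
      ‖Cᵀ * E * C‖ ≤ ϑ * c := by
    intro E c hE
    calc ‖Cᵀ * E * C‖ ≤ ‖Cᵀ * E‖ * ‖C‖ := Matrix.l2_opNorm_mul _ _
    _ ≤ (‖Cᵀ‖ * ‖E‖) * ‖C‖ :=
        mul_le_mul_of_nonneg_right (Matrix.l2_opNorm_mul _ _) (norm_nonneg _)
    _ = (‖C‖ * ‖C‖) * ‖E‖ := by
        have hct : ‖Cᵀ‖ = ‖C‖ := Matrix.l2_opNorm_conjTranspose C
        rw [hct]; ring
    _ ≤ ϑ * c := mul_le_mul hCbound hE (norm_nonneg _) hϑ0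
  constructor
  · intro i
    rw [specNorm_eq_l2, hΓfac i]
    exact (hbound _ η (hEi i)).trans_eq rfl
  · -- averaged bound
    have hmne : (m:ℝ) ≠ 0 := by exact_mod_cast hm.ne'
    have h1 : ∑ i, Γ i
        = Cᵀ * (∑ i, ((1 : Matrix (Fin ρ) (Fin ρ) ℝ) - Uᵀ*(S i*(S i)ᵀ)*U)) * C := by
      calc ∑ i, Γ i = ∑ i, Cᵀ * ((1 : Matrix (Fin ρ) (Fin ρ) ℝ) - Uᵀ*(S i*(S i)ᵀ)*U) * C :=
            Finset.sum_congr rfl fun i _ => hΓfac i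
      _ = Cᵀ * (∑ i, ((1 : Matrix (Fin ρ) (Fin ρ) ℝ) - Uᵀ*(S i*(S i)ᵀ)*U)) * C := by
            rw [Matrix.mul_sum, Matrix.sum_mul]
    have h2 : (m:ℝ)⁻¹ • ∑ i, ((1 : Matrix (Fin ρ) (Fin ρ) ℝ) - Uᵀ*(S i*(S i)ᵀ)*U)
        = (1 : Matrix (Fin ρ) (Fin ρ) ℝ) - Uᵀ*((m : ℝ)⁻¹ • ∑ i, S i * (S i)ᵀ)*U := by
      rw [Finset.sum_sub_distrib, Finset.sum_const, Finset.card_univ, Fintype.card_fin,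
        smul_sub]
      congr 1
      · rw [← Nat.cast_smul_eq_nsmul ℝ, smul_smul, inv_mul_cancel₀ hmne, one_smul]
      · rw [Matrix.mul_smul, Matrix.smul_mul]
        congr 1
        rw [Matrix.mul_sum, Matrix.sum_mul]
    have hsum : (m : ℝ)⁻¹ • ∑ i, Γ i
        = Cᵀ * ((1 : Matrix (Fin ρ) (Fin ρ) ℝ) - Uᵀ*((m : ℝ)⁻¹ • ∑ i, S i * (S i)ᵀ)*U) * C := by
      rw [h1, ← h2, Matrix.mul_smul, Matrix.smul_mul]
    have hE' : ‖(1 : Matrix (Fin ρ) (Fin ρ) ℝ) - Uᵀ*((m : ℝ)⁻¹ • ∑ i, S i * (S i)ᵀ)*U‖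
        ≤ η / Real.sqrt m := by
      rw [norm_sub_rev, ← specNorm_eq_l2]
      exact hS
    rw [specNorm_eq_l2, hsum, mul_div_assoc]
    exact hbound _ _ hE'
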